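/- Let a < b and let f : [a,b] → ℝ satisfy: (f1) f(a)·f(b) < 0; (f2) f is continuously differentiable on [a,b] and f'(x) ≠ 0 for all x ∈ [a,b]; (f3) 2m > M, where m = min_{x∈[a,b]} |f'(x)| and M = max_{x∈[a,b]} |f'(x)|. Let x* be the unique solution of f(x) = 0 in [a,b] and let β ∈ (0,1]. Then the damped Newton map K_β(x) = x − β·f(x)/f'(x) is a quasi-contraction with respect to x*: there exists λ ∈ (0,1) such that |K_β(x) − x*| ≤ λ·|x − x*| for all x ∈ [a,b]. -/
import Mathlib

open Set

/-- Under conditions (f1)–(f3), for every `β ∈ (0,1]` the damped Newton map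
`K_β(x) = x − β·f(x)/f'(x)` is a quasi-contraction with respect to the unique solution
`x*` of `f(x) = 0` in `[a,b]`: there is `l ∈ (0,1)` with
`|K_β(x) − x*| ≤ l·|x − x*|` for all `x ∈ [a,b]`. -/
theorem damped_newton_quasi_contraction
    (a b : ℝ) (hab : a < b) (f f' : ℝ → ℝ)
    (hderiv : ∀ x ∈ Set.Icc a b, HasDerivWithinAt f (f' x) (Set.Icc a b) x)
    (hf'cont : ContinuousOn f' (Set.Icc a b))
    (hf1 : f a * f b < 0)
    (hf'ne : ∀ x ∈ Set.Icc a b, f' x ≠ 0)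
    (m M : ℝ)
    (hm : IsLeast ((fun x => |f' x|) '' Set.Icc a b) m)
    (hM : IsGreatest ((fun x => |f' x|) '' Set.Icc a b) M)
    (hmM : 2 * m > M)
    (xstar : ℝ) (hxstar : xstar ∈ Set.Icc a b) (hroot : f xstar = 0)
    (β : ℝ) (hβ0 : 0 < β) (hβ1 : β ≤ 1) :
    ∃ l : ℝ, 0 < l ∧ l < 1 ∧
      ∀ x ∈ Set.Icc a b, |(x - β * (f x / f' x)) - xstar| ≤ l * |x - xstar| := by
  have hfc : ContinuousOn f (Icc a b) := fun x hx => (hderiv x hx).continuousWithinAt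
  obtain ⟨x0, hx0, hx0m⟩ := hm.1
  have hm0 : 0 < m := by rw [← hx0m]; exact abs_pos.mpr (hf'ne x0 hx0)
  have haI : a ∈ Icc a b := ⟨le_refl a, le_of_lt hab⟩
  have hmM' : m ≤ M := le_trans (hm.2 ⟨a, haI, rfl⟩) (hM.2 ⟨a, haI, rfl⟩)
  have hM0 : 0 < M := lt_of_lt_of_le hm0 hmM'
  set l : ℝ := max (max (1 - β * m / M) (M / m - 1)) (1/2) with hl
  have hl0 : 0 < l := lt_of_lt_of_le (by norm_num) (le_max_right _ _)
  have hl1 : l < 1 := by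
    apply max_lt (max_lt ?_ ?_) (by norm_num)
    · have : 0 < β * m / M := by positivity
      linarith
    · rw [div_sub_one hm0.ne', div_lt_one hm0]
      linarith
  refine ⟨l, hl0, hl1, ?_⟩
  -- key ratio estimate
  have hratio : ∀ u v : ℝ, m ≤ u → u ≤ M → m ≤ v → v ≤ M → |1 - β * (u / v)| ≤ l := by
    intro u v hu1 hu2 hv1 hv2
    have hv0 : 0 < v := lt_of_lt_of_le hm0 hv1
    have hu0 : 0 ≤ u := le_trans hm0.le hu1
    rw [abs_le]
    constructor
    · have h1 : β * (u / v) ≤ M / m := by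
        calc β * (u / v) ≤ 1 * (u / v) :=
              mul_le_mul_of_nonneg_right hβ1 (by positivity)
          _ = u / v := one_mul _
          _ ≤ M / m := div_le_div₀ hM0.le hu2 hm0 hv1
      have h2 : M / m - 1 ≤ l := le_trans (le_max_right _ _) (le_max_left _ _)
      linarith
    · have h1 : β * m / M ≤ β * (u / v) := by
        rw [mul_div_assoc]
        exact mul_le_mul_of_nonneg_left (div_le_div₀ hu0 hu1 hv0 hv2) hβ0.le
      have h2 : 1 - β * m / M ≤ l := le_trans (le_max_left _ _) (le_max_left _ _)
      linarith
  -- f' has constant sign on [a,b]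
  have hkey : ∀ p ∈ Icc a b, ∀ q ∈ Icc a b, f' p < 0 → 0 < f' q → False := by
    intro p hp q hq hpneg hqpos
    have hsub : uIcc p q ⊆ Icc a b := uIcc_subset_Icc hp hq
    have h0 : (0 : ℝ) ∈ uIcc (f' p) (f' q) := by
      rw [Set.mem_uIcc]; left; exact ⟨hpneg.le, hqpos.le⟩
    obtain ⟨z, hz, hz0⟩ := intermediate_value_uIcc (hf'cont.mono hsub) h0
    exact hf'ne z (hsub hz) hz0
  have hsign : (∀ y ∈ Icc a b, |f' y| = f' y) ∨ (∀ y ∈ Icc a b, |f' y| = -f' y) := by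
    rcases (hf'ne a haI).lt_or_gt with hA | hA
    · right
      intro y hy
      have : f' y < 0 := by
        rcases (hf'ne y hy).lt_or_gt with h | h
        · exact h
        · exact absurd (hkey a haI y hy hA h) (fun h => h)
      exact abs_of_neg this
    · left
      intro y hy
      have : 0 < f' y := by
        rcases (hf'ne y hy).lt_or_gt with h | h
        · exact absurd (hkey y hy a haI h hA) (fun h => h)
        · exact h
      exact abs_of_pos this
  intro x hx
  rcases eq_or_ne x xstar with rfl | hne
  · simp [hroot]
  have hfx0 : f' x ≠ 0 := hf'ne x hx
  -- mean value theorem: get c with f x = f' c * (x - xstar)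
  obtain ⟨c, hcI, hc2⟩ :
      ∃ c ∈ Icc a b, f x = f' c * (x - xstar) := by
    rcases hne.lt_or_gt with hlt | hlt
    · have hIoo : Ioo x xstar ⊆ Ioo a b := Ioo_subset_Ioo hx.1 hxstar.2
      obtain ⟨c, hc, hslope⟩ :=
        exists_hasDerivAt_eq_slope f f' hlt
          (hfc.mono (Icc_subset_Icc hx.1 hxstar.2))
          (fun y hy => (hderiv y (Ioo_subset_Icc_self (hIoo hy))).hasDerivAt
            (Icc_mem_nhds (hIoo hy).1 (hIoo hy).2))
      refine ⟨c, Ioo_subset_Icc_self (hIoo hc), ?_⟩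
      have h1 : f xstar - f x = f' c * (xstar - x) := by
        rw [hslope]; field_simp [sub_ne_zero.mpr hlt.ne']
      linear_combination hroot - h1
    · have hIoo : Ioo xstar x ⊆ Ioo a b := Ioo_subset_Ioo hxstar.1 hx.2
      obtain ⟨c, hc, hslope⟩ :=
        exists_hasDerivAt_eq_slope f f' hlt
          (hfc.mono (Icc_subset_Icc hxstar.1 hx.2))
          (fun y hy => (hderiv y (Ioo_subset_Icc_self (hIoo hy))).hasDerivAt
            (Icc_mem_nhds (hIoo hy).1 (hIoo hy).2))
      refine ⟨c, Ioo_subset_Icc_self (hIoo hc), ?_⟩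
      have h1 : f x - f xstar = f' c * (x - xstar) := by
        rw [hslope]; field_simp [sub_ne_zero.mpr hlt.ne']
      linear_combination h1 + hroot
  have hr : f' c / f' x = |f' c| / |f' x| := by
    rcases hsign with hs | hs
    · rw [hs c hcI, hs x hx]
    · rw [hs c hcI, hs x hx, neg_div_neg_eq]
  have heq : (x - β * (f x / f' x)) - xstar = (x - xstar) * (1 - β * (f' c / f' x)) := by
    rw [hc2]; field_simp; ring
  have hbound : |1 - β * (f' c / f' x)| ≤ l := by
    rw [hr]
    exact hratio _ _ (hm.2 ⟨c, hcI, rfl⟩) (hM.2 ⟨c, hcI, rfl⟩)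
      (hm.2 ⟨x, hx, rfl⟩) (hM.2 ⟨x, hx, rfl⟩)
  calc |(x - β * (f x / f' x)) - xstar|
      = |x - xstar| * |1 - β * (f' c / f' x)| := by rw [heq, abs_mul]
    _ ≤ |x - xstar| * l := mul_le_mul_of_nonneg_left hbound (abs_nonneg _)
    _ = l * |x - xstar| := mul_comm _ _
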